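/- For probability distributions P, Q with strictly positive entries, the triangular discrimination is bounded by the reversed Kullback–Leibler divergence: Δ(P‖Q) ≤ (32/27)·K(Q‖P), where K(Q‖P) = ∑ q_i ln(q_i/p_i). -/

import Mathlib

noncomputable def Faux : ℝ → ℝ := fun t => t - 1 - Real.log t - 27/32 * ((t-1)^2/(t+1))

lemma Faux_hasDerivAt (t : ℝ) (ht : 0 < t) :
    HasDerivAt Faux (1 - t⁻¹ - 27/32 * ((2*(t-1)*(t+1) - (t-1)^2*1)/((t+1)^2))) t := by
  have h1 : HasDerivAt (fun t:ℝ => t - 1) 1 t := by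
    simpa using (hasDerivAt_id t).sub_const 1
  have hlog : HasDerivAt Real.log t⁻¹ t := Real.hasDerivAt_log (ne_of_gt ht)
  have hnum : HasDerivAt (fun t:ℝ => (t-1)^2) (2*(t-1)) t := by
    have := ((hasDerivAt_id t).sub_const 1).pow 2
    exact (by simpa [mul_comm] using this : HasDerivAt ((fun x:ℝ => x - 1) ^ 2) (2*(t-1)) t)
  have hden : HasDerivAt (fun t:ℝ => t+1) 1 t := by
    simpa using (hasDerivAt_id t).add_const 1
  have hdiv : HasDerivAt (fun t:ℝ => (t-1)^2/(t+1))
      ((2*(t-1)*(t+1) - (t-1)^2*1)/((t+1)^2)) t :=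
    hnum.div hden (by linarith)
  exact (h1.sub hlog).sub (hdiv.const_mul (27/32))

lemma Faux_deriv_eq (t : ℝ) (ht : 0 < t) :
    deriv Faux t = (t-1)*(5*t^2-17*t+32)/(32*t*(t+1)^2) := by
  rw [(Faux_hasDerivAt t ht).deriv]
  have h1 : t + 1 ≠ 0 := by linarith
  field_simp
  ring

lemma Faux_nonneg (t : ℝ) (ht : 0 < t) : 0 ≤ Faux t := by
  have hF1 : Faux 1 = 0 := by simp [Faux]
  have hcont : ∀ s ∈ Set.Ioi (0:ℝ), ContinuousAt Faux s := fun s hs =>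
    (Faux_hasDerivAt s hs).continuousAt
  have hquad : ∀ s : ℝ, 0 < 5*s^2-17*s+32 := by
    intro s; nlinarith [sq_nonneg (s - 17/10)]
  rcases lt_trichotomy t 1 with h | h | h
  · -- t < 1 : Faux strictly decreasing on [t,1]
    have hanti : StrictAntiOn Faux (Set.Icc t 1) := by
      apply strictAntiOn_of_deriv_neg (convex_Icc t 1)
      · exact continuousOn_of_forall_continuousAt (fun s hs => hcont s (lt_of_lt_of_le ht hs.1))
      · intro s hs
        rw [interior_Icc] at hs
        have hs0 : 0 < s := lt_trans ht hs.1
        rw [Faux_deriv_eq s hs0]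
        apply div_neg_of_neg_of_pos
        · have : s - 1 < 0 := by linarith [hs.2]
          nlinarith [hquad s]
        · positivity
    have := hanti (Set.mem_Icc.mpr ⟨le_refl t, le_of_lt h⟩)
      (Set.mem_Icc.mpr ⟨le_of_lt h, le_refl 1⟩) h
    rw [hF1] at this; linarith
  · rw [h, hF1]
  · -- 1 < t : Faux strictly increasing on [1,t]
    have hmono : StrictMonoOn Faux (Set.Icc 1 t) := by
      apply strictMonoOn_of_deriv_pos (convex_Icc 1 t)
      · exact continuousOn_of_forall_continuousAt (fun s hs => hcont s (lt_of_lt_of_le one_pos hs.1))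
      · intro s hs
        rw [interior_Icc] at hs
        have hs0 : 0 < s := lt_trans one_pos hs.1
        rw [Faux_deriv_eq s hs0]
        apply div_pos
        · have : 0 < s - 1 := by linarith [hs.1]
          nlinarith [hquad s]
        · positivity
    have := hmono (Set.mem_Icc.mpr ⟨le_refl 1, le_of_lt h⟩)
      (Set.mem_Icc.mpr ⟨le_of_lt h, le_refl t⟩) h
    rw [hF1] at this; linarith

lemma log_bound (t : ℝ) (ht : 0 < t) :
    27/32 * ((t-1)^2/(t+1)) ≤ t - 1 - Real.log t := by
  have := Faux_nonneg t ht
  simp only [Faux] at this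
  linarith

lemma pointwise (a b : ℝ) (ha : 0 < a) (hb : 0 < b) :
    (a - b)^2 / (a + b) ≤ 32/27 * (b * Real.log (b/a) + (a - b)) := by
  have hab : 0 < a + b := by linarith
  have haux := log_bound (a/b) (by positivity)
  have e1 : (a/b - 1)^2/(a/b+1) = (a-b)^2/(b*(a+b)) := by
    field_simp
  have e2 : Real.log (a/b) = - Real.log (b/a) := by
    rw [← Real.log_inv]
    congr 1
    field_simp
  rw [e1, e2] at haux
  have hmul := mul_le_mul_of_nonneg_left haux (by positivity : (0:ℝ) ≤ 32/27 * b)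
  calc (a - b)^2 / (a + b) = 32/27 * b * (27/32 * ((a-b)^2/(b*(a+b)))) := by
        field_simp
    _ ≤ 32/27 * b * (a/b - 1 - -Real.log (b/a)) := hmul
    _ = 32/27 * (b * Real.log (b/a) + (a - b)) := by
        field_simp; ring

theorem stmt_7 (n : ℕ) (p q : Fin n → ℝ)
    (hp : ∀ i, 0 < p i) (hq : ∀ i, 0 < q i)
    (hp1 : ∑ i, p i = 1) (hq1 : ∑ i, q i = 1) :
    ∑ i, (p i - q i)^2 / (p i + q i) ≤
      32 / 27 * ∑ i, q i * Real.log (q i / p i) := by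
  have key : ∀ i, (p i - q i)^2 / (p i + q i) ≤
      32/27 * (q i * Real.log (q i / p i) + (p i - q i)) :=
    fun i => pointwise (p i) (q i) (hp i) (hq i)
  calc ∑ i, (p i - q i)^2 / (p i + q i)
      ≤ ∑ i, 32/27 * (q i * Real.log (q i / p i) + (p i - q i)) :=
        Finset.sum_le_sum (fun i _ => key i)
    _ = 32/27 * (∑ i, q i * Real.log (q i / p i) + (∑ i, p i - ∑ i, q i)) := by
        rw [← Finset.mul_sum, Finset.sum_add_distrib, Finset.sum_sub_distrib]
    _ = 32 / 27 * ∑ i, q i * Real.log (q i / p i) := by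
        rw [hp1, hq1]; ring
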